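/- Let C be a symmetric monoidal category with finite products, !₁ a comonad on C that preserves finite products, !₂ a storage comonad on C, and λ a distributive law of !₁ over !₂. Then the composite comonad !₂ ∘ !₁ is a storage comonad on C. -/

import Mathlib

/-!
STATEMENT 1: Let C be a symmetric monoidal category with finite products, !₁ a
comonad on C that preserves finite products, !₂ a storage comonad on C, and λ a
distributive law of !₁ over !₂.  Then the composite comonad !₂ ∘ !₁ is a storage
comonad on C.

A storage comonad is packaged as `StorageStruct`, parametrized by explicit
comonad data (functor, comultiplication δ, counit ε) and comonoid data (c, e):
it asserts the comonad laws, that each !A is a cocommutative comonoid with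
natural structure maps, that δ is a comonoid morphism, and the Seely
isomorphisms.
-/

open CategoryTheory CategoryTheory.Limits MonoidalCategory

universe v u

/-- A storage comonad structure on the explicit data `(F, δ, ε, c, e)`. -/
structure StorageStruct {C : Type u} [Category.{v} C] [MonoidalCategory C]
    [SymmetricCategory C] [HasFiniteProducts C]
    (F : C ⥤ C)
    (δ : ∀ A : C, F.obj A ⟶ F.obj (F.obj A))
    (ε : ∀ A : C, F.obj A ⟶ A)
    (c : ∀ A : C, F.obj A ⟶ F.obj A ⊗ F.obj A)
    (e : ∀ A : C, F.obj A ⟶ 𝟙_ C) : Prop where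
  /- comonad laws -/
  δ_natural : ∀ {A B : C} (f : A ⟶ B), F.map f ≫ δ B = δ A ≫ F.map (F.map f)
  ε_natural : ∀ {A B : C} (f : A ⟶ B), F.map f ≫ ε B = ε A ≫ f
  left_counit : ∀ A : C, δ A ≫ ε (F.obj A) = 𝟙 (F.obj A)
  right_counit : ∀ A : C, δ A ≫ F.map (ε A) = 𝟙 (F.obj A)
  coassoc : ∀ A : C, δ A ≫ δ (F.obj A) = δ A ≫ F.map (δ A)
  /- each !A is a cocommutative comonoid, naturally in A -/
  c_natural : ∀ {A B : C} (f : A ⟶ B), F.map f ≫ c B = c A ≫ (F.map f ⊗ₘ F.map f)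
  e_natural : ∀ {A B : C} (f : A ⟶ B), F.map f ≫ e B = e A
  comul_coassoc : ∀ A : C,
    c A ≫ (c A ▷ F.obj A) ≫ (α_ (F.obj A) (F.obj A) (F.obj A)).hom
      = c A ≫ (F.obj A ◁ c A)
  comul_counit_left : ∀ A : C, c A ≫ (e A ▷ F.obj A) ≫ (λ_ (F.obj A)).hom = 𝟙 (F.obj A)
  comul_counit_right : ∀ A : C, c A ≫ (F.obj A ◁ e A) ≫ (ρ_ (F.obj A)).hom = 𝟙 (F.obj A)
  cocomm : ∀ A : C, c A ≫ (β_ (F.obj A) (F.obj A)).hom = c A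
  /- δ is a morphism of comonoids -/
  δ_comonoid_mul : ∀ A : C, δ A ≫ c (F.obj A) = c A ≫ (δ A ⊗ₘ δ A)
  δ_comonoid_unit : ∀ A : C, δ A ≫ e (F.obj A) = e A
  /- Seely isomorphisms -/
  seely_unit : IsIso (e (⊤_ C))
  seely_prod : ∀ A B : C,
    IsIso (c (A ⨯ B) ≫ (F.map Limits.prod.fst ⊗ₘ F.map Limits.prod.snd))

theorem composite_comonad_is_storage
    {C : Type u} [Category.{v} C] [MonoidalCategory C] [SymmetricCategory C]
    [HasFiniteProducts C]
    -- !₁, a comonad preserving finite products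
    (T₁ : Comonad C) [PreservesFiniteProducts T₁.toFunctor]
    -- !₂, a storage comonad
    (F₂ : C ⥤ C)
    (δ₂ : ∀ A : C, F₂.obj A ⟶ F₂.obj (F₂.obj A))
    (ε₂ : ∀ A : C, F₂.obj A ⟶ A)
    (c₂ : ∀ A : C, F₂.obj A ⟶ F₂.obj A ⊗ F₂.obj A)
    (e₂ : ∀ A : C, F₂.obj A ⟶ 𝟙_ C)
    (S : StorageStruct F₂ δ₂ ε₂ c₂ e₂)
    -- λ, a distributive law of !₁ over !₂
    (l : T₁.toFunctor ⋙ F₂ ⟶ F₂ ⋙ T₁.toFunctor)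
    (hμ₁ : ∀ A : C,
      F₂.map (T₁.δ.app A) ≫ l.app (T₁.obj A) ≫ T₁.map (l.app A)
        = l.app A ≫ T₁.δ.app (F₂.obj A))
    (hμ₂ : ∀ A : C,
      δ₂ (T₁.obj A) ≫ F₂.map (l.app A) ≫ l.app (F₂.obj A)
        = l.app A ≫ T₁.map (δ₂ A))
    (hε₂ : ∀ A : C, l.app A ≫ T₁.map (ε₂ A) = ε₂ (T₁.obj A))
    (hε₁ : ∀ A : C, l.app A ≫ T₁.ε.app (F₂.obj A) = F₂.map (T₁.ε.app A)) :
    -- then the composite comonad !₂ ∘ !₁ is a storage comonad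
    StorageStruct (T₁.toFunctor ⋙ F₂)
      (fun A => δ₂ (T₁.obj A) ≫ F₂.map (F₂.map (T₁.δ.app A))
          ≫ F₂.map (l.app (T₁.obj A)))
      (fun A => ε₂ (T₁.obj A) ≫ T₁.ε.app A)
      (fun A => c₂ (T₁.obj A))
      (fun A => e₂ (T₁.obj A)) := by
  have lnat : ∀ {X Y : C} (g : X ⟶ Y),
      F₂.map (T₁.map g) ≫ l.app Y = l.app X ≫ T₁.map (F₂.map g) := fun g => l.naturality g
  have mnat : ∀ {X Y : C} (g : X ⟶ Y),
      T₁.map g ≫ T₁.δ.app Y = T₁.δ.app X ≫ T₁.map (T₁.map g) := fun g => T₁.δ.naturality g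
  refine
    { δ_natural := ?_, ε_natural := ?_, left_counit := ?_, right_counit := ?_,
      coassoc := ?_, c_natural := ?_, e_natural := ?_, comul_coassoc := ?_,
      comul_counit_left := ?_, comul_counit_right := ?_, cocomm := ?_,
      δ_comonoid_mul := ?_, δ_comonoid_unit := ?_, seely_unit := ?_, seely_prod := ?_ }
  · -- δ_natural
    intro A B f
    dsimp only [Functor.comp_obj, Functor.comp_map]
    rw [reassoc_of% S.δ_natural (T₁.map f)]
    slice_lhs 2 3 => rw [← F₂.map_comp, ← F₂.map_comp, mnat f, F₂.map_comp, F₂.map_comp]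
    slice_lhs 3 4 => rw [← F₂.map_comp, lnat (T₁.map f), F₂.map_comp]
    simp only [Category.assoc]
  · -- ε_natural
    intro A B f
    dsimp only [Functor.comp_obj, Functor.comp_map]
    rw [reassoc_of% S.ε_natural (T₁.map f), T₁.ε.naturality f]
    simp only [Functor.id_map, Category.assoc]
  · -- left_counit
    intro A
    dsimp only [Functor.comp_obj]
    rw [Category.assoc, Category.assoc, reassoc_of% S.ε_natural (l.app (T₁.obj A)),
      reassoc_of% S.ε_natural (F₂.map (T₁.δ.app A)),
      reassoc_of% S.left_counit (T₁.obj A)]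
    rw [hε₁ (T₁.obj A), ← F₂.map_comp, T₁.left_counit, F₂.map_id]
  · -- right_counit
    intro A
    dsimp only [Functor.comp_obj, Functor.comp_map]
    rw [T₁.map_comp, F₂.map_comp]
    slice_lhs 3 4 => rw [← F₂.map_comp, hε₂ (T₁.obj A)]
    have en2 : F₂.map (T₁.δ.app A) ≫ ε₂ (T₁.obj (T₁.obj A))
        = ε₂ (T₁.obj A) ≫ T₁.δ.app A := S.ε_natural (T₁.δ.app A)
    slice_lhs 2 3 => rw [← F₂.map_comp, en2, F₂.map_comp]
    slice_lhs 3 4 => rw [← F₂.map_comp, T₁.right_counit, F₂.map_id]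
    rw [Category.comp_id, S.right_counit]
  · -- coassoc
    intro A
    dsimp only [Functor.comp_obj, Functor.comp_map]
    simp only [Functor.map_comp, Category.assoc]
    have h1 : F₂.map (l.app (T₁.obj A)) ≫ δ₂ (T₁.obj (F₂.obj (T₁.obj A)))
        = δ₂ (F₂.obj (T₁.obj (T₁.obj A))) ≫ F₂.map (F₂.map (l.app (T₁.obj A))) :=
      S.δ_natural (l.app (T₁.obj A))
    have h2 : F₂.map (F₂.map (T₁.δ.app A)) ≫ δ₂ (F₂.obj (T₁.obj (T₁.obj A)))
        = δ₂ (F₂.obj (T₁.obj A)) ≫ F₂.map (F₂.map (F₂.map (T₁.δ.app A))) :=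
      S.δ_natural (F₂.map (T₁.δ.app A))
    have h3 : δ₂ (T₁.obj A) ≫ δ₂ (F₂.obj (T₁.obj A))
        = δ₂ (T₁.obj A) ≫ F₂.map (δ₂ (T₁.obj A)) := S.coassoc (T₁.obj A)
    rw [reassoc_of% h1, reassoc_of% h2, reassoc_of% h3]
    have h4 : F₂.map (l.app (T₁.obj A)) ≫ F₂.map (T₁.map (δ₂ (T₁.obj A)))
        = F₂.map (δ₂ (T₁.obj (T₁.obj A))) ≫ F₂.map (F₂.map (l.app (T₁.obj A)))
            ≫ F₂.map (l.app (F₂.obj (T₁.obj A))) := by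
      simp only [← F₂.map_comp]; rw [← hμ₂ (T₁.obj A)]
    rw [reassoc_of% h4]
    have h5 : F₂.map (l.app (F₂.obj (T₁.obj A)))
          ≫ F₂.map (T₁.map (F₂.map (F₂.map (T₁.δ.app A))))
        = F₂.map (F₂.map (T₁.map (F₂.map (T₁.δ.app A))))
            ≫ F₂.map (l.app (F₂.obj (T₁.obj (T₁.obj A)))) := by
      have k : F₂.map (T₁.map (F₂.map (T₁.δ.app A))) ≫ l.app (F₂.obj (T₁.obj (T₁.obj A)))
          = l.app (F₂.obj (T₁.obj A)) ≫ T₁.map (F₂.map (F₂.map (T₁.δ.app A))) :=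
        lnat (F₂.map (T₁.δ.app A))
      simp only [← F₂.map_comp]; rw [← k]
    rw [reassoc_of% h5]
    have h6 : F₂.map (l.app (F₂.obj (T₁.obj (T₁.obj A))))
          ≫ F₂.map (T₁.map (F₂.map (l.app (T₁.obj A))))
        = F₂.map (F₂.map (T₁.map (l.app (T₁.obj A))))
            ≫ F₂.map (l.app (T₁.obj (F₂.obj (T₁.obj A)))) := by
      have k : F₂.map (T₁.map (l.app (T₁.obj A))) ≫ l.app (T₁.obj (F₂.obj (T₁.obj A)))
          = l.app (F₂.obj (T₁.obj (T₁.obj A))) ≫ T₁.map (F₂.map (l.app (T₁.obj A))) :=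
        lnat (l.app (T₁.obj A))
      simp only [← F₂.map_comp]; rw [← k]
    rw [h6]
    have h7 : F₂.map (F₂.map (T₁.δ.app A)) ≫ F₂.map (δ₂ (T₁.obj (T₁.obj A)))
        = F₂.map (δ₂ (T₁.obj A)) ≫ F₂.map (F₂.map (F₂.map (T₁.δ.app A))) := by
      have h7' : F₂.map (T₁.δ.app A) ≫ δ₂ (T₁.obj (T₁.obj A))
          = δ₂ (T₁.obj A) ≫ F₂.map (F₂.map (T₁.δ.app A)) := S.δ_natural (T₁.δ.app A)
      simp only [← F₂.map_comp]; rw [h7']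
    rw [reassoc_of% h7]
    have h8 : F₂.map (F₂.map (l.app (T₁.obj A)))
          ≫ F₂.map (F₂.map (T₁.δ.app (F₂.obj (T₁.obj A))))
        = F₂.map (F₂.map (F₂.map (T₁.δ.app (T₁.obj A))))
            ≫ F₂.map (F₂.map (l.app (T₁.obj (T₁.obj A))))
            ≫ F₂.map (F₂.map (T₁.map (l.app (T₁.obj A)))) := by
      simp only [← F₂.map_comp]; rw [← hμ₁ (T₁.obj A)]
    rw [reassoc_of% h8]
    have h9 : F₂.map (F₂.map (l.app (T₁.obj A)))
          ≫ F₂.map (F₂.map (T₁.map (F₂.map (T₁.δ.app A))))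
        = F₂.map (F₂.map (F₂.map (T₁.map (T₁.δ.app A))))
            ≫ F₂.map (F₂.map (l.app (T₁.obj (T₁.obj A)))) := by
      have k : F₂.map (T₁.map (T₁.δ.app A)) ≫ l.app (T₁.obj (T₁.obj A))
          = l.app (T₁.obj A) ≫ T₁.map (F₂.map (T₁.δ.app A)) := lnat (T₁.δ.app A)
      simp only [← F₂.map_comp]; rw [← k]
    rw [reassoc_of% h9]
    have h10 : F₂.map (F₂.map (F₂.map (T₁.δ.app A)))
          ≫ F₂.map (F₂.map (F₂.map (T₁.δ.app (T₁.obj A))))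
        = F₂.map (F₂.map (F₂.map (T₁.δ.app A)))
            ≫ F₂.map (F₂.map (F₂.map (T₁.map (T₁.δ.app A)))) := by
      simp only [← F₂.map_comp]
      rw [show T₁.δ.app A ≫ T₁.δ.app (T₁.obj A)
            = T₁.δ.app A ≫ T₁.map (T₁.δ.app A) from (T₁.coassoc A).symm]
    rw [reassoc_of% h10]
  · exact fun {A B} f => S.c_natural (T₁.map f)
  · exact fun {A B} f => S.e_natural (T₁.map f)
  · exact fun A => S.comul_coassoc (T₁.obj A)
  · exact fun A => S.comul_counit_left (T₁.obj A)
  · exact fun A => S.comul_counit_right (T₁.obj A)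
  · exact fun A => S.cocomm (T₁.obj A)
  · -- δ_comonoid_mul
    intro A
    dsimp only [Functor.comp_obj]
    simp only [Category.assoc]
    rw [S.c_natural, reassoc_of% S.c_natural (F₂.map (T₁.δ.app A)),
      reassoc_of% S.δ_comonoid_mul (T₁.obj A)]
    simp [tensorHom_comp_tensorHom]
  · -- δ_comonoid_unit
    intro A
    dsimp only [Functor.comp_obj]
    simp only [Category.assoc, S.e_natural, S.δ_comonoid_unit]
  · -- seely_unit
    have h : e₂ (T₁.obj (⊤_ C))
        = F₂.map ((PreservesTerminal.iso T₁.toFunctor).hom) ≫ e₂ (⊤_ C) := (S.e_natural _).symm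
    rw [h]
    exact @IsIso.comp_isIso _ _ _ _ _ _ _ inferInstance S.seely_unit
  · -- seely_prod
    intro A B
    have h1 : (T₁.map (prod.fst : A ⨯ B ⟶ A)) = prodComparison T₁.toFunctor A B ≫ prod.fst :=
      (prodComparison_fst _ _ _).symm
    have h2 : (T₁.map (prod.snd : A ⨯ B ⟶ B)) = prodComparison T₁.toFunctor A B ≫ prod.snd :=
      (prodComparison_snd _ _ _).symm
    dsimp only [Functor.comp_map]
    rw [h1, h2, F₂.map_comp, F₂.map_comp, ← tensorHom_comp_tensorHom, ← Category.assoc, ← S.c_natural,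
      Category.assoc]
    exact @IsIso.comp_isIso _ _ _ _ _ _ _ inferInstance (S.seely_prod _ _)
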